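/- The polynomial G(X) = 6X^3 + 2X^2 + X + 1 is a permutation polynomial over a ring of modulo 2^w (its induced map on ℤ/2^wℤ is a bijection for every w ≥ 0), but it is not a one-stroke polynomial over the ring; in particular there is no X̄ ∈ ℤ/2^3ℤ whose orbit {G^i(X̄) mod 2^3 : i = 0, 1, …, 2^3 − 1} equals all of ℤ/2^3ℤ. -/

import Mathlib

open Polynomial

/-- `f` is a permutation polynomial over a ring of modulo `2^w`:
for every `w ≥ 0`, the induced map on `ℤ/2^wℤ` is a bijection. -/
def IsPermPoly (f : Polynomial ℤ) : Prop :=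
  ∀ w : ℕ, Function.Bijective (fun x : ZMod (2 ^ w) => f.eval₂ (Int.castRingHom (ZMod (2 ^ w))) x)

/-- `f` is a one-stroke polynomial over a ring of modulo `2^w`:
it is a permutation polynomial and, for every `w ≥ 1` and every point of `ℤ/2^wℤ`,
the orbit `{f^i(X̄) : 0 ≤ i < 2^w}` is all of `ℤ/2^wℤ`. -/
def IsOneStroke (f : Polynomial ℤ) : Prop :=
  IsPermPoly f ∧ ∀ w : ℕ, 1 ≤ w → ∀ x : ℤ, ∀ y : ZMod (2 ^ w),
    ∃ i < 2 ^ w, (((fun t => f.eval t)^[i] x : ℤ) : ZMod (2 ^ w)) = y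

/-- Any element of the form `1 + 2a` is a unit in `ZMod (2^n)`. -/
lemma aux_unit_odd (n : ℕ) (a : ZMod (2 ^ n)) : IsUnit (1 + 2 * a) := by
  apply IsUnit.of_mul_eq_one (∑ i ∈ Finset.range n, (-(2 * a)) ^ i)
  have h := geom_sum_mul (-(2 * a)) n
  have h2 : (-(2 * a)) ^ n = 0 := by
    have : ((2 ^ n : ℕ) : ZMod (2 ^ n)) = 0 := ZMod.natCast_self _
    push_cast at this
    rw [neg_pow, mul_pow, this]
    ring
  rw [h2] at h
  linear_combination -h

/-- The induced map of `G` on `ZMod (2^3)`. -/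
def auxG (t : ZMod (2 ^ 3)) : ZMod (2 ^ 3) := 6 * t ^ 3 + 2 * t ^ 2 + t + 1

lemma aux_cast_iter (x : ℤ) (i : ℕ) :
    (((fun t => (6 * X ^ 3 + 2 * X ^ 2 + X + 1 : Polynomial ℤ).eval t)^[i] x : ℤ) :
        ZMod (2 ^ 3)) = auxG^[i] (x : ZMod (2 ^ 3)) := by
  induction i generalizing x with
  | zero => rfl
  | succ k ih =>
    rw [Function.iterate_succ_apply, Function.iterate_succ_apply, ih]
    congr 1
    simp [auxG]

lemma aux_no_orbit :
    ¬ ∃ x : ZMod (2 ^ 3), ∀ y : ZMod (2 ^ 3), ∃ i < 2 ^ 3, auxG^[i] x = y := by decide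

theorem stmt_10 :
    IsPermPoly (6 * X ^ 3 + 2 * X ^ 2 + X + 1 : Polynomial ℤ) ∧
    ¬ IsOneStroke (6 * X ^ 3 + 2 * X ^ 2 + X + 1 : Polynomial ℤ) ∧
    ¬ ∃ x : ℤ, ∀ y : ZMod (2 ^ 3),
        ∃ i < 2 ^ 3,
          (((fun t => (6 * X ^ 3 + 2 * X ^ 2 + X + 1 : Polynomial ℤ).eval t)^[i] x : ℤ) :
              ZMod (2 ^ 3)) = y := by
  have hperm : IsPermPoly (6 * X ^ 3 + 2 * X ^ 2 + X + 1 : Polynomial ℤ) := by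
    intro w
    rw [← Finite.injective_iff_bijective]
    intro x y h
    simp only [eval₂_add, eval₂_mul, eval₂_pow, eval₂_X, eval₂_one, eval₂_ofNat] at h
    have hz : (x - y) * (1 + 2 * (3 * (x ^ 2 + x * y + y ^ 2) + (x + y))) = 0 := by
      linear_combination h
    have hu := aux_unit_odd w (3 * (x ^ 2 + x * y + y ^ 2) + (x + y))
    have := (hu.mul_left_eq_zero).mp hz
    exact sub_eq_zero.mp this
  have h3 : ¬ ∃ x : ℤ, ∀ y : ZMod (2 ^ 3),
      ∃ i < 2 ^ 3,
        (((fun t => (6 * X ^ 3 + 2 * X ^ 2 + X + 1 : Polynomial ℤ).eval t)^[i] x : ℤ) :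
            ZMod (2 ^ 3)) = y := by
    rintro ⟨x, hx⟩
    apply aux_no_orbit
    refine ⟨(x : ZMod (2 ^ 3)), fun y => ?_⟩
    obtain ⟨i, hi, hy⟩ := hx y
    exact ⟨i, hi, by rw [← aux_cast_iter]; exact hy⟩
  refine ⟨hperm, ?_, h3⟩
  rintro ⟨-, h⟩
  exact h3 ⟨0, fun y => h 3 (by norm_num) 0 y⟩
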